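/- Let q(z) = Σ_{n≥1} aₙ z^{n-1} be a power series converging for |z| < R, let δ ∈ ℂ, and let (cₙ) satisfy c₀ = 1 and -2n(n-δ)cₙ = Σ_{j=0}^{n-1} a_{n-j}c_j for all n ≥ 1 with 2n(n-δ) ≠ 0 (assume the recursion is consistent where 2n(n-δ) = 0). Then the power series Σ cₙ zⁿ converges for |z| < R. -/

import Mathlib

open Finset

/-- Convergence of the formal solution: if `q(z) = Σ_{n≥1} aₙ z^{n-1}` converges for
`‖z‖ < R` and `(cₙ)` satisfies the recursion `-2n(n-δ)cₙ = Σ_{j<n} a_{n-j} c_j`, then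
`Σ cₙ zⁿ` converges for `‖z‖ < R`. -/
theorem formal_solution_converges (R : ℝ) (hR : 0 < R) (δ : ℂ) (a c : ℕ → ℂ)
    (ha : ∀ z : ℂ, ‖z‖ < R → Summable (fun n : ℕ => a (n + 1) * z ^ n))
    (hc0 : c 0 = 1)
    (hrec : ∀ n : ℕ, 1 ≤ n →
      -(2 * (n : ℂ) * ((n : ℂ) - δ)) * c n = ∑ j ∈ range n, a (n - j) * c j) :
    ∀ z : ℂ, ‖z‖ < R → Summable (fun n : ℕ => c n * z ^ n) := by
  intro z hz
  set r : ℝ := ‖z‖ with hr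
  have hr0 : 0 ≤ r := norm_nonneg z
  set ρ : ℝ := (r + R) / 2 with hρ
  have hρpos : 0 < ρ := by positivity
  have hrρ : r < ρ := by simp only [hρ]; linarith
  have hρR : ρ < R := by simp only [hρ]; linarith
  -- summability of the norms of a at radius ρ
  have hρnorm : ‖(ρ : ℂ)‖ = ρ := by
    rw [Complex.norm_real, Real.norm_eq_abs, abs_of_pos hρpos]
  have hsum : Summable (fun n : ℕ => ‖a (n + 1)‖ * ρ ^ n) := by
    have h1 := ha (ρ : ℂ) (by rw [hρnorm]; exact hρR)
    have h2 : Summable (fun n : ℕ => ‖a (n + 1) * (ρ : ℂ) ^ n‖) :=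
      summable_norm_iff.mpr h1
    have : (fun n : ℕ => ‖a (n + 1) * (ρ : ℂ) ^ n‖)
        = fun n : ℕ => ‖a (n + 1)‖ * ρ ^ n := by
      funext n
      rw [norm_mul, norm_pow, hρnorm]
    rwa [this] at h2
  obtain ⟨S, hS⟩ : ∃ S : ℝ, S = ∑' n : ℕ, ‖a (n + 1)‖ * ρ ^ n := ⟨_, rfl⟩
  have hS0 : 0 ≤ S := by rw [hS]; exact tsum_nonneg fun n => by positivity
  have hSsum : ∀ n : ℕ, ∑ j ∈ range n, ‖a (j + 1)‖ * ρ ^ j ≤ S := by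
    intro n
    rw [hS]
    exact hsum.sum_le_tsum (range n) (fun i _ => by positivity)
  obtain ⟨K, hK⟩ : ∃ K : ℝ, K = max (ρ * S) 1 := ⟨_, rfl⟩
  have hK1 : (1 : ℝ) ≤ K := hK ▸ le_max_right _ _
  have hKρS : ρ * S ≤ K := hK ▸ le_max_left _ _
  obtain ⟨N, hNdef⟩ : ∃ N : ℕ, N = ⌈‖δ‖ + K⌉₊ + 1 := ⟨_, rfl⟩
  have hN1 : 1 ≤ N := hNdef ▸ Nat.le_add_left 1 _
  have hNbig : ∀ n : ℕ, N ≤ n → K ≤ (n : ℝ) * ((n : ℝ) - ‖δ‖) := by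
    intro n hn
    have h1 : ‖δ‖ + K ≤ (n : ℝ) := by
      calc ‖δ‖ + K ≤ (⌈‖δ‖ + K⌉₊ : ℝ) := Nat.le_ceil _
        _ ≤ (n : ℝ) := by
            have : ⌈‖δ‖ + K⌉₊ + 1 ≤ n := hNdef ▸ hn
            exact_mod_cast Nat.le_of_succ_le this
    have hδ0 : (0 : ℝ) ≤ ‖δ‖ := norm_nonneg δ
    nlinarith
  obtain ⟨M, hM⟩ : ∃ M : ℝ, M = ∑ j ∈ range N, ‖c j‖ * ρ ^ j := ⟨_, rfl⟩
  have hM0 : 0 ≤ M := hM ▸ sum_nonneg fun j _ => by positivity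
  have hMj : ∀ j : ℕ, j < N → ‖c j‖ * ρ ^ j ≤ M := by
    intro j hj
    exact hM ▸ single_le_sum (f := fun j => ‖c j‖ * ρ ^ j)
      (fun i _ => by positivity) (mem_range.mpr hj)
  -- main claim by strong induction
  have key : ∀ n : ℕ, ‖c n‖ * ρ ^ n ≤ M := by
    intro n
    induction n using Nat.strong_induction_on with
    | _ n ih =>
      rcases lt_or_ge n N with hn | hn
      · exact hMj n hn
      · have hn1 : 1 ≤ n := le_trans hN1 hn
        have hrecn := hrec n hn1
        -- norm of the LHS
        have hLHS : ‖-(2 * (n : ℂ) * ((n : ℂ) - δ)) * c n‖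
            = 2 * (n : ℝ) * ‖(n : ℂ) - δ‖ * ‖c n‖ := by
          rw [norm_mul, norm_neg, norm_mul, norm_mul]
          simp [Complex.norm_natCast]
        have hA : 2 * (n : ℝ) * ‖(n : ℂ) - δ‖ * ‖c n‖
            ≤ ∑ j ∈ range n, ‖a (n - j)‖ * ‖c j‖ := by
          rw [← hLHS, hrecn]
          refine (norm_sum_le _ _).trans ?_
          exact sum_le_sum fun j _ => (norm_mul _ _).le
        -- multiply by ρ^n
        have hρn : 0 ≤ ρ ^ n := by positivity
        have hB : 2 * (n : ℝ) * ‖(n : ℂ) - δ‖ * (‖c n‖ * ρ ^ n)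
            ≤ ∑ j ∈ range n, (‖a (n - j)‖ * ρ ^ (n - 1 - j)) * ((‖c j‖ * ρ ^ j) * ρ) := by
          calc 2 * (n : ℝ) * ‖(n : ℂ) - δ‖ * (‖c n‖ * ρ ^ n)
              = (2 * (n : ℝ) * ‖(n : ℂ) - δ‖ * ‖c n‖) * ρ ^ n := by ring
            _ ≤ (∑ j ∈ range n, ‖a (n - j)‖ * ‖c j‖) * ρ ^ n :=
                mul_le_mul_of_nonneg_right hA hρn
            _ = ∑ j ∈ range n, (‖a (n - j)‖ * ρ ^ (n - 1 - j)) * ((‖c j‖ * ρ ^ j) * ρ) := by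
                rw [sum_mul]
                refine sum_congr rfl fun j hj => ?_
                have hjn : j < n := mem_range.mp hj
                have hpow : ρ ^ (n - 1 - j) * ρ ^ j * ρ = ρ ^ n := by
                  rw [← pow_add, ← pow_succ]
                  congr 1
                  omega
                calc ‖a (n - j)‖ * ‖c j‖ * ρ ^ n
                    = ‖a (n - j)‖ * ‖c j‖ * (ρ ^ (n - 1 - j) * ρ ^ j * ρ) := by rw [hpow]
                  _ = ‖a (n - j)‖ * ρ ^ (n - 1 - j) * (‖c j‖ * ρ ^ j * ρ) := by ring
        have hC : ∑ j ∈ range n, (‖a (n - j)‖ * ρ ^ (n - 1 - j)) * ((‖c j‖ * ρ ^ j) * ρ)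
            ≤ S * (M * ρ) := by
          have hterm : ∀ j ∈ range n,
              (‖a (n - j)‖ * ρ ^ (n - 1 - j)) * ((‖c j‖ * ρ ^ j) * ρ)
              ≤ (‖a (n - j)‖ * ρ ^ (n - 1 - j)) * (M * ρ) := by
            intro j hj
            have hjn : j < n := mem_range.mp hj
            refine mul_le_mul_of_nonneg_left ?_ (by positivity)
            exact mul_le_mul_of_nonneg_right (ih j hjn) (le_of_lt hρpos)
          calc ∑ j ∈ range n, (‖a (n - j)‖ * ρ ^ (n - 1 - j)) * ((‖c j‖ * ρ ^ j) * ρ)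
              ≤ ∑ j ∈ range n, (‖a (n - j)‖ * ρ ^ (n - 1 - j)) * (M * ρ) :=
                sum_le_sum hterm
            _ = (∑ j ∈ range n, ‖a (n - j)‖ * ρ ^ (n - 1 - j)) * (M * ρ) := by
                rw [sum_mul]
            _ ≤ S * (M * ρ) := by
                refine mul_le_mul_of_nonneg_right ?_ (by positivity)
                have hreflect : ∑ j ∈ range n, ‖a (n - j)‖ * ρ ^ (n - 1 - j)
                    = ∑ j ∈ range n, ‖a (j + 1)‖ * ρ ^ j := by
                  rw [← sum_range_reflect (fun j => ‖a (j + 1)‖ * ρ ^ j) n]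
                  refine sum_congr rfl fun j hj => ?_
                  have hjn : j < n := mem_range.mp hj
                  have hidx : n - j = n - 1 - j + 1 := by omega
                  rw [hidx]
                rw [hreflect]
                exact hSsum n
        -- lower bound for the coefficient
        have hnormδ : (n : ℝ) - ‖δ‖ ≤ ‖(n : ℂ) - δ‖ := by
          have := norm_sub_norm_le ((n : ℂ)) δ
          simpa [Complex.norm_natCast] using this
        have hnδK : K ≤ (n : ℝ) * ‖(n : ℂ) - δ‖ := by
          refine le_trans (hNbig n hn) ?_
          have hn0 : (0 : ℝ) ≤ (n : ℝ) := Nat.cast_nonneg n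
          exact mul_le_mul_of_nonneg_left hnormδ hn0
        have hx0 : 0 ≤ ‖c n‖ * ρ ^ n := by positivity
        have hAB := hB.trans hC
        nlinarith [mul_le_mul_of_nonneg_right hnδK hx0, mul_nonneg hM0 (le_trans zero_le_one hK1)]
  -- conclude summability by geometric comparison
  have hgeo : Summable (fun n : ℕ => M * (r / ρ) ^ n) := by
    refine Summable.mul_left M ?_
    apply summable_geometric_of_lt_one (by positivity)
    rw [div_lt_one hρpos]
    exact hrρ
  refine Summable.of_norm_bounded hgeo fun n => ?_
  have hρn : (0 : ℝ) < ρ ^ n := by positivity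
  have h1 : ‖c n * z ^ n‖ = ‖c n‖ * r ^ n := by
    rw [norm_mul, norm_pow]
  rw [h1, div_pow]
  have h2 : ‖c n‖ * r ^ n = (‖c n‖ * ρ ^ n) * (r ^ n / ρ ^ n) := by
    field_simp
  rw [h2]
  exact mul_le_mul_of_nonneg_right (key n) (by positivity)
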